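/- For the n×n symmetric tridiagonal Toeplitz matrix T with diagonal -2 and off-diagonals 1, the inverse satisfies (T^{-1})_{ij} = -i(n-j+1)/(n+1) for i ≤ j and (T^{-1})_{ij} = -j(n-i+1)/(n+1) for i > j. -/

import Mathlib

noncomputable def sFun (n : ℕ) (a b : ℕ) : ℝ :=
  if a ≤ b then -(((a : ℝ) + 1) * ((n : ℝ) - (b : ℝ))) / ((n : ℝ) + 1)
  else -(((b : ℝ) + 1) * ((n : ℝ) - (a : ℝ))) / ((n : ℝ) + 1)

noncomputable def Smat (n : ℕ) : Matrix (Fin n) (Fin n) ℝ := fun i j => sFun n i.1 j.1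

lemma tsplit (a b : ℕ) :
    (if a = b then (-2 : ℝ) else if Nat.dist a b = 1 then 1 else 0)
      = (if b = a then (-2:ℝ) else 0) + (if b = a + 1 then 1 else 0)
        + (if a = b + 1 then 1 else 0) := by
  rw [Nat.dist]
  split_ifs <;> first | omega | norm_num

lemma key_sum (n i j : ℕ) (hi : i < n) (hj : j < n) :
    ∑ k ∈ Finset.range n,
      (if i = k then (-2 : ℝ) else if Nat.dist i k = 1 then 1 else 0) * sFun n k j
      = if i = j then 1 else 0 := by
  have : ∀ k, (if i = k then (-2 : ℝ) else if Nat.dist i k = 1 then 1 else 0) * sFun n k j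
      = (if k = i then (-2:ℝ) * sFun n k j else 0) + (if k = i + 1 then sFun n k j else 0)
        + (if i = k + 1 then sFun n k j else 0) := by
    intro k
    rw [tsplit, add_mul, add_mul, ite_mul, ite_mul, ite_mul, zero_mul, one_mul]
  simp only [this, Finset.sum_add_distrib, Finset.sum_ite_eq', Finset.mem_range]
  have h3 : (∑ x ∈ Finset.range n, if i = x + 1 then sFun n x j else 0)
      = if 1 ≤ i then sFun n (i-1) j else 0 := by
    rcases i with _ | m
    · simp
    · have h4 : ∀ x : ℕ, (if m + 1 = x + 1 then sFun n x j else 0)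
          = if x = m then sFun n x j else 0 := by
        intro x
        by_cases h : x = m
        · simp [h]
        · rw [if_neg (show ¬(m + 1 = x + 1) by omega), if_neg h]
      rw [Finset.sum_congr rfl fun x _ => h4 x,
        Finset.sum_ite_eq' (Finset.range n) m (fun x => sFun n x j),
        if_pos (Finset.mem_range.2 (by omega))]
      simp
  rw [h3, if_pos hi]
  have hn : ((n:ℝ) + 1) ≠ 0 := by positivity
  unfold sFun
  split_ifs with h1 h2 h3 h4 h5 <;>
    (first
      | omega
      | push_cast [Nat.cast_sub (show (1:ℕ) ≤ i by omega)]
      | push_cast) <;>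
    field_simp <;> try ring_nf
  · -- i = 0, i < j
    have f : (i:ℝ) = 0 := by exact_mod_cast show i = 0 by omega
    linear_combination ((n:ℝ) - j) * f
  · -- i = j, 1 ≤ i, i+1 < n
    have e : (i:ℝ) = j := by exact_mod_cast show i = j by omega
    linear_combination ((n:ℝ) + 1) * e
  · -- i = j = 0, i+1 < n
    have e : (i:ℝ) = j := by exact_mod_cast show i = j by omega
    have f : (i:ℝ) = 0 := by exact_mod_cast show i = 0 by omega
    linear_combination ((n:ℝ) + 1) * e + ((n:ℝ) - (j:ℝ)) * f
  · -- i = j, 1 ≤ i, n = i+1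
    have e : (i:ℝ) = j := by exact_mod_cast show i = j by omega
    have g : (n:ℝ) = (i:ℝ) + 1 := by exact_mod_cast show n = i + 1 by omega
    linear_combination ((i:ℝ) + 2) * e + ((i:ℝ) + 1) * g
  · -- i = j = 0, n = 1
    have e : (i:ℝ) = j := by exact_mod_cast show i = j by omega
    have f : (i:ℝ) = 0 := by exact_mod_cast show i = 0 by omega
    have g : (n:ℝ) = 1 := by exact_mod_cast show n = 1 by omega
    linear_combination 2 * e + (2 * ((n:ℝ) - j) - 2) * f + g
  · -- i = j+1, i+1 < n
    have e : (i:ℝ) = (j:ℝ) + 1 := by exact_mod_cast show i = j + 1 by omega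
    linear_combination (-(n:ℝ) - 1) * e
  · -- i = j+1, n = i+1
    have e : (i:ℝ) = (j:ℝ) + 1 := by exact_mod_cast show i = j + 1 by omega
    have g : (n:ℝ) = (i:ℝ) + 1 := by exact_mod_cast show n = i + 1 by omega
    linear_combination (-(i:ℝ) - 2) * e + (2 * (j:ℝ) + 2 - (i:ℝ)) * g
  · -- i > j+1, n = i+1
    have g : (n:ℝ) = (i:ℝ) + 1 := by exact_mod_cast show n = i + 1 by omega
    linear_combination ((j:ℝ) + 1) * g

/-- The n×n symmetric tridiagonal Toeplitz matrix with diagonal -2 and off-diagonal 1. -/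
def Tmat (n : ℕ) : Matrix (Fin n) (Fin n) ℝ :=
  fun i j => if i = j then -2 else if Nat.dist i.1 j.1 = 1 then 1 else 0

lemma key (n : ℕ) : Tmat n * Smat n = 1 := by
  ext i j
  rw [Matrix.mul_apply]
  have h := key_sum n i.1 j.1 i.2 j.2
  rw [← Fin.sum_univ_eq_sum_range
    (fun k => (if i.1 = k then (-2:ℝ) else if Nat.dist i.1 k = 1 then 1 else 0) * sFun n k j.1) n] at h
  simp only [Matrix.one_apply]
  rw [show (if i = j then (1:ℝ) else 0) = if i.1 = j.1 then 1 else 0 from by simp [Fin.ext_iff]]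
  rw [← h]
  apply Finset.sum_congr rfl
  intro k _
  simp [Tmat, Smat, Fin.ext_iff]

/-- Explicit entries of T⁻¹ (with 1-based indices i+1, j+1):
    (T⁻¹)_{ij} = -i(n-j+1)/(n+1) for i ≤ j, and -j(n-i+1)/(n+1) for i > j. -/
theorem stmt1 (n : ℕ) (i j : Fin n) :
    (Tmat n)⁻¹ i j =
      if (i : ℕ) ≤ (j : ℕ) then
        -(((i : ℝ) + 1) * ((n : ℝ) - (j : ℝ))) / ((n : ℝ) + 1)
      else
        -(((j : ℝ) + 1) * ((n : ℝ) - (i : ℝ))) / ((n : ℝ) + 1) := by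
  rw [Matrix.inv_eq_right_inv (key n)]
  rfl
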